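/- arXiv:1610.03025 — 2 statements merged into one kernel-verified Lean document; each statement's English description precedes it below -/
import Mathlib

section
/- Suppose the family (U^n)_{n∈ℕ} solves the explicit upwind scheme and the CFL condition holds with bounds L⁺, L⁻. If the sequence j ↦ |U^0_j| is bounded above by a real number B, then |U^n_j| ≤ B for all n ∈ ℕ and j ∈ ℤ (discrete maximum principle). -/
open scoped BigOperators

/-- The L1 coefficients `c^{n+1}_k` for the discrete Caputo derivative:
`c^{n+1}_0 = (n+1)^{1-α} - n^{1-α}` and, for `1 ≤ k ≤ n`,
`c^{n+1}_k = 2(n+1-k)^{1-α} - (n+2-k)^{1-α} - (n-k)^{1-α}`. -/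
noncomputable def caputoCoeff (α : ℝ) (n k : ℕ) : ℝ :=
  if k = 0 then ((n : ℝ) + 1) ^ (1 - α) - (n : ℝ) ^ (1 - α)
  else 2 * ((n : ℝ) + 1 - (k : ℝ)) ^ (1 - α) - ((n : ℝ) + 2 - (k : ℝ)) ^ (1 - α)
    - ((n : ℝ) - (k : ℝ)) ^ (1 - α)

/-- `U` solves the explicit upwind scheme with time steps indexed by `ℕ`
and space indexed by `ℤ`. -/
def SolvesExplicitScheme (α δ : ℝ) (fp fm : ℝ → ℝ) (U : ℕ → ℤ → ℝ) : Prop :=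
  ∀ (n : ℕ) (j : ℤ),
    U (n + 1) j = (∑ k ∈ Finset.range (n + 1), caputoCoeff α n k * U k j)
      - δ * (fp (U n j) - fp (U n (j - 1)))
      - δ * (fm (U n (j + 1)) - fm (U n j))

/-- The CFL condition with bounds `Lp, Lm`:
`(f⁺)' ≤ Lp`, `(f⁻)' ≥ -Lm` and `δ (Lp + Lm) ≤ 2 - 2^{1-α}`. -/
def CFLCondition (α δ Lp Lm : ℝ) (fp fm : ℝ → ℝ) : Prop :=
  0 ≤ Lp ∧ 0 ≤ Lm ∧ (∀ x, deriv fp x ≤ Lp) ∧ (∀ x, -Lm ≤ deriv fm x) ∧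
    δ * (Lp + Lm) ≤ 2 - (2 : ℝ) ^ (1 - α)

/-- Mean value theorem in slope form, for all pairs of points. -/
lemma exists_slope_aux (f : ℝ → ℝ) (hf : Differentiable ℝ f) (x y : ℝ) :
    ∃ t : ℝ, f x - f y = deriv f t * (x - y) := by
  rcases lt_trichotomy x y with hxy | hxy | hxy
  · obtain ⟨c, _, hc⟩ := exists_hasDerivAt_eq_slope f (deriv f) hxy
      hf.continuous.continuousOn (fun z _ => (hf z).hasDerivAt)
    refine ⟨c, ?_⟩
    have h0 : y - x ≠ 0 := sub_ne_zero.mpr hxy.ne'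
    rw [hc]
    field_simp
    ring
  · exact ⟨0, by rw [hxy]; ring⟩
  · obtain ⟨c, _, hc⟩ := exists_hasDerivAt_eq_slope f (deriv f) hxy
      hf.continuous.continuousOn (fun z _ => (hf z).hasDerivAt)
    refine ⟨c, ?_⟩
    have h0 : x - y ≠ 0 := sub_ne_zero.mpr hxy.ne'
    rw [hc]
    field_simp

/-- Nonnegativity of the Caputo coefficients. -/
lemma caputoCoeff_nonneg {α : ℝ} (hα0 : 0 < α) (hα1 : α < 1) {n k : ℕ} (hk : k ≤ n) :
    0 ≤ caputoCoeff α n k := by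
  have hp0 : (0 : ℝ) < 1 - α := by linarith
  have hp1 : 1 - α < 1 := by linarith
  unfold caputoCoeff
  split_ifs with h
  · have : ((n : ℝ)) ^ (1 - α) ≤ ((n : ℝ) + 1) ^ (1 - α) :=
      Real.rpow_le_rpow (Nat.cast_nonneg n) (by linarith) hp0.le
    linarith
  · -- concavity of x ^ (1-α)
    have hkn : (k : ℝ) ≤ n := Nat.cast_le.mpr hk
    set a : ℝ := (n : ℝ) - k with ha
    have ha0 : 0 ≤ a := by simp [ha]; linarith
    have hcc := (Real.strictConcaveOn_rpow hp0 hp1).concaveOn.2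
      (Set.mem_Ici.mpr ha0) (Set.mem_Ici.mpr (by linarith : (0:ℝ) ≤ a + 2))
      (by norm_num : (0:ℝ) ≤ 1/2) (by norm_num : (0:ℝ) ≤ 1/2) (by norm_num)
    simp only [smul_eq_mul] at hcc
    have hmid : (1/2 : ℝ) * a + (1/2 : ℝ) * (a + 2) = a + 1 := by ring
    rw [hmid] at hcc
    have e1 : (n : ℝ) + 1 - k = a + 1 := by rw [ha]; ring
    have e2 : (n : ℝ) + 2 - k = a + 2 := by rw [ha]; ring
    have e3 : (n : ℝ) - k = a := by rw [ha]
    rw [e1, e2]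
    linarith

/-- The Caputo coefficients sum to one. -/
lemma caputoCoeff_sum {α : ℝ} (hα1 : α < 1) (n : ℕ) :
    ∑ k ∈ Finset.range (n + 1), caputoCoeff α n k = 1 := by
  have hp0 : (0 : ℝ) < 1 - α := by linarith
  rw [Finset.sum_range_succ']
  set F : ℕ → ℝ := fun i => ((n : ℝ) + 1 - i) ^ (1 - α) - ((n : ℝ) - i) ^ (1 - α) with hF
  have hstep : ∀ i ∈ Finset.range n, caputoCoeff α n (i + 1) = F (i + 1) - F i := by
    intro i _
    simp only [hF, caputoCoeff, Nat.succ_ne_zero, if_false]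
    push_cast
    have e1 : (n : ℝ) + 1 - ((i : ℝ) + 1) = (n : ℝ) - i := by ring
    have e2 : (n : ℝ) + 2 - ((i : ℝ) + 1) = (n : ℝ) + 1 - (i : ℝ) := by ring
    rw [e1, e2]
    ring
  rw [Finset.sum_congr rfl hstep, Finset.sum_range_sub F n]
  have hFn : F n = 1 := by
    simp only [hF]
    rw [show (n : ℝ) + 1 - (n : ℝ) = 1 by ring, show (n : ℝ) - (n : ℝ) = 0 by ring,
      Real.one_rpow, Real.zero_rpow (by linarith : 1 - α ≠ 0)]
    norm_num
  have hF0 : F 0 = caputoCoeff α n 0 := by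
    simp [hF, caputoCoeff]
  rw [hFn, hF0]
  ring

/-- Lower bound on the last Caputo coefficient. -/
lemma caputoCoeff_last {α : ℝ} (hα0 : 0 < α) (hα1 : α < 1) (n : ℕ) :
    2 - (2 : ℝ) ^ (1 - α) ≤ caputoCoeff α n n := by
  have hp0 : (0 : ℝ) < 1 - α := by linarith
  have h2 : (1 : ℝ) ≤ (2 : ℝ) ^ (1 - α) :=
    Real.one_le_rpow (by norm_num) hp0.le
  cases n with
  | zero =>
    have h0 : caputoCoeff α 0 0 = 1 := by
      simp [caputoCoeff, Real.zero_rpow (by linarith : 1 - α ≠ 0)]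
    rw [h0]
    linarith
  | succ m =>
    have hne : m + 1 ≠ 0 := Nat.succ_ne_zero m
    simp only [caputoCoeff, if_neg hne]
    push_cast
    have e1 : (m : ℝ) + 1 + 1 - ((m : ℝ) + 1) = 1 := by ring
    have e2 : (m : ℝ) + 1 + 2 - ((m : ℝ) + 1) = 2 := by ring
    have e3 : (m : ℝ) + 1 - ((m : ℝ) + 1) = 0 := by ring
    rw [e1, e2, e3, Real.one_rpow, Real.zero_rpow (by linarith : 1 - α ≠ 0)]
    linarith

/-- discrete maximum principle for the explicit upwind scheme under
the CFL condition: if `|U^0_j| ≤ B` for all `j`, then `|U^n_j| ≤ B` for all `n, j`. -/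
theorem explicit_upwind_max_principle (α τ h : ℝ) (hα : α ∈ Set.Ioo (0 : ℝ) 1)
    (hτ : 0 < τ) (hh : 0 < h) (δ : ℝ) (hδ : δ = τ ^ α / (h * Real.Gamma (2 - α)))
    (fp fm : ℝ → ℝ) (hfp : Differentiable ℝ fp) (hfm : Differentiable ℝ fm)
    (hfp' : ∀ x, 0 ≤ deriv fp x) (hfm' : ∀ x, deriv fm x ≤ 0)
    (U : ℕ → ℤ → ℝ) (hU : SolvesExplicitScheme α δ fp fm U)
    (Lp Lm : ℝ) (hcfl : CFLCondition α δ Lp Lm fp fm)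
    (B : ℝ) (hB : ∀ j : ℤ, |U 0 j| ≤ B) :
    ∀ (n : ℕ) (j : ℤ), |U n j| ≤ B := by
  obtain ⟨hα0, hα1⟩ := hα
  obtain ⟨hLp, hLm, hfpL, hfmL, hCFL⟩ := hcfl
  have hΓ : 0 < Real.Gamma (2 - α) := Real.Gamma_pos_of_pos (by linarith)
  have hδ0 : 0 ≤ δ := by rw [hδ]; positivity
  have hB0 : 0 ≤ B := le_trans (abs_nonneg _) (hB 0)
  intro n
  induction n using Nat.strong_induction_on with
  | _ n IH =>
    cases n with
    | zero => exact hB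
    | succ n =>
      intro j
      obtain ⟨s, hs⟩ := exists_slope_aux fp hfp (U n j) (U n (j - 1))
      obtain ⟨t, ht⟩ := exists_slope_aux fm hfm (U n (j + 1)) (U n j)
      set a := deriv fp s with hadef
      set b := deriv fm t with hbdef
      have ha0 : 0 ≤ a := hfp' s
      have haL : a ≤ Lp := hfpL s
      have hb0 : b ≤ 0 := hfm' t
      have hbL : -Lm ≤ b := hfmL t
      have hrec := hU n j
      rw [hs, ht, Finset.sum_range_succ] at hrec
      have key : U (n + 1) j = (∑ k ∈ Finset.range n, caputoCoeff α n k * U k j)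
          + (caputoCoeff α n n + δ * (b - a)) * U n j
          + (δ * a) * U n (j - 1) + (-(δ * b)) * U n (j + 1) := by
        rw [hrec]; ring
      -- coefficient bounds
      have hAn : 0 ≤ caputoCoeff α n n + δ * (b - a) := by
        have h1 : δ * (a - b) ≤ δ * (Lp + Lm) :=
          mul_le_mul_of_nonneg_left (by linarith) hδ0
        have h2 := caputoCoeff_last hα0 hα1 n
        linarith
      have hP : 0 ≤ δ * a := mul_nonneg hδ0 ha0
      have hQ : 0 ≤ -(δ * b) := by nlinarith
      have hIHn : ∀ j : ℤ, |U n j| ≤ B := IH n (Nat.lt_succ_self n)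
      have hsum1 : (∑ k ∈ Finset.range n, caputoCoeff α n k) + caputoCoeff α n n = 1 := by
        have := caputoCoeff_sum (α := α) hα1 n
        rwa [Finset.sum_range_succ] at this
      have hS : |∑ k ∈ Finset.range n, caputoCoeff α n k * U k j|
          ≤ (∑ k ∈ Finset.range n, caputoCoeff α n k) * B := by
        calc |∑ k ∈ Finset.range n, caputoCoeff α n k * U k j|
            ≤ ∑ k ∈ Finset.range n, |caputoCoeff α n k * U k j| :=
              Finset.abs_sum_le_sum_abs _ _
          _ ≤ ∑ k ∈ Finset.range n, caputoCoeff α n k * B := by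
              refine Finset.sum_le_sum fun k hk => ?_
              have hk' : k ≤ n := (Finset.mem_range.mp hk).le
              have hc := caputoCoeff_nonneg hα0 hα1 hk'
              rw [abs_mul, abs_of_nonneg hc]
              exact mul_le_mul_of_nonneg_left
                (IH k (Nat.lt_succ_of_le hk') j) hc
          _ = (∑ k ∈ Finset.range n, caputoCoeff α n k) * B := by
              rw [Finset.sum_mul]
      have h1 : |(caputoCoeff α n n + δ * (b - a)) * U n j|
          ≤ (caputoCoeff α n n + δ * (b - a)) * B := by
        rw [abs_mul, abs_of_nonneg hAn]
        exact mul_le_mul_of_nonneg_left (hIHn j) hAn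
      have h2 : |(δ * a) * U n (j - 1)| ≤ (δ * a) * B := by
        rw [abs_mul, abs_of_nonneg hP]
        exact mul_le_mul_of_nonneg_left (hIHn (j - 1)) hP
      have h3 : |(-(δ * b)) * U n (j + 1)| ≤ (-(δ * b)) * B := by
        rw [abs_mul, abs_of_nonneg hQ]
        exact mul_le_mul_of_nonneg_left (hIHn (j + 1)) hQ
      have habs : |U (n + 1) j| ≤ |∑ k ∈ Finset.range n, caputoCoeff α n k * U k j|
          + |(caputoCoeff α n n + δ * (b - a)) * U n j|
          + |(δ * a) * U n (j - 1)| + |(-(δ * b)) * U n (j + 1)| := by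
        rw [key]
        exact le_trans (abs_add_le _ _)
          (add_le_add (le_trans (abs_add_le _ _)
            (add_le_add (abs_add_le _ _) le_rfl)) le_rfl)
      have final : (∑ k ∈ Finset.range n, caputoCoeff α n k) * B
          + (caputoCoeff α n n + δ * (b - a)) * B + (δ * a) * B + (-(δ * b)) * B = B := by
        have : ((∑ k ∈ Finset.range n, caputoCoeff α n k) + caputoCoeff α n n) * B = B := by
          rw [hsum1, one_mul]
        nlinarith [this]
      linarith [habs, hS, h1, h2, h3]
end

section
/- Suppose (U^n) and (V^n) both solve the implicit upwind scheme (with the same f⁺, f⁻, δ). Assume that for every n ∈ ℕ the sequence j ↦ |U^n_j − V^n_j| is summable over ℤ, and that for every n ∈ ℕ the sequences j ↦ |f⁺(U^n_j) − f⁺(V^n_j)| and j ↦ |f⁻(U^n_j) − f⁻(V^n_j)| are summable over ℤ. Then the implicit upwind scheme is unconditionally ℓ¹ contracting: for every n ∈ ℕ, Σ_{j∈ℤ} |U^n_j − V^n_j| ≤ Σ_{j∈ℤ} |U^0_j − V^0_j|, with no CFL condition on τ and h. -/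
open scoped BigOperators

/-- `U` solves the implicit upwind scheme with time steps indexed by `ℕ`
and space indexed by `ℤ`. -/
def SolvesImplicitScheme (α δ : ℝ) (fp fm : ℝ → ℝ) (U : ℕ → ℤ → ℝ) : Prop :=
  ∀ (n : ℕ) (j : ℤ),
    U (n + 1) j = (∑ k ∈ Finset.range (n + 1), caputoCoeff α n k * U k j)
      - δ * (fp (U (n + 1) j) - fp (U (n + 1) (j - 1)))
      - δ * (fm (U (n + 1) (j + 1)) - fm (U (n + 1) j))

lemma caputo_nonneg {α : ℝ} (hα : α ∈ Set.Ioo (0:ℝ) 1) {n k : ℕ} (hk : k ≤ n) :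
    0 ≤ caputoCoeff α n k := by
  obtain ⟨hα0, hα1⟩ := hα
  have hp0 : (0:ℝ) < 1 - α := by linarith
  have hp1 : (1:ℝ) - α ≤ 1 := by linarith
  unfold caputoCoeff
  split_ifs with hk0
  · have := Real.rpow_le_rpow (by positivity) (by linarith : (n:ℝ) ≤ (n:ℝ)+1) hp0.le
    linarith
  · have hk1 : (1:ℝ) ≤ (k:ℝ) := by exact_mod_cast Nat.one_le_iff_ne_zero.2 hk0
    have hkn : (k:ℝ) ≤ (n:ℝ) := by exact_mod_cast hk
    set m : ℝ := (n:ℝ) + 1 - (k:ℝ) with hm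
    have hm1 : 1 ≤ m := by simp only [hm]; linarith
    have hc := (Real.concaveOn_rpow hp0.le hp1).2 (x := m - 1) (y := m + 1)
      (Set.mem_Ici.2 (by linarith)) (Set.mem_Ici.2 (by linarith))
      (by norm_num : (0:ℝ) ≤ 1/2) (by norm_num : (0:ℝ) ≤ 1/2) (by norm_num)
    simp only [smul_eq_mul] at hc
    have e1 : (1:ℝ)/2 * (m - 1) + 1/2 * (m + 1) = m := by ring
    rw [e1] at hc
    have e2 : (n:ℝ) + 2 - (k:ℝ) = m + 1 := by simp only [hm]; ring
    have e3 : (n:ℝ) - (k:ℝ) = m - 1 := by simp only [hm]; ring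
    rw [e2, e3]
    linarith

lemma caputo_sum {α : ℝ} (hα : α ∈ Set.Ioo (0:ℝ) 1) (n : ℕ) :
    ∑ k ∈ Finset.range (n+1), caputoCoeff α n k = 1 := by
  obtain ⟨hα0, hα1⟩ := hα
  have hp : (1:ℝ) - α ≠ 0 := by linarith
  set F : ℕ → ℝ := fun i => ((n:ℝ) + 1 - (i:ℝ)) ^ (1-α) - ((n:ℝ) - (i:ℝ)) ^ (1-α) with hF
  have key : ∀ k ∈ Finset.range (n+1), caputoCoeff α n k =
      if k = 0 then F 0 else F k - F (k-1) := by
    intro k hk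
    unfold caputoCoeff
    split_ifs with hk0
    · simp [hF]
    · have hk1 : 1 ≤ k := Nat.one_le_iff_ne_zero.2 hk0
      have hc : ((k-1 : ℕ) : ℝ) = (k:ℝ) - 1 := by
        push_cast [Nat.cast_sub hk1]; ring
      simp only [hF, hc]
      have e2 : (n:ℝ) + 1 - ((k:ℝ) - 1) = (n:ℝ) + 2 - (k:ℝ) := by ring
      have e3 : (n:ℝ) - ((k:ℝ) - 1) = (n:ℝ) + 1 - (k:ℝ) := by ring
      rw [e2, e3]; ring
  rw [Finset.sum_congr rfl key, Finset.sum_range_succ']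
  have e0 : ∀ i ∈ Finset.range n, (if i + 1 = 0 then F 0 else F (i+1) - F (i+1-1))
      = F (i+1) - F i := by intro i _; simp
  rw [Finset.sum_congr rfl e0, Finset.sum_range_sub F, if_pos rfl]
  have hFn : F n = 1 := by
    simp only [hF]
    have e : (n:ℝ) + 1 - (n:ℝ) = 1 := by ring
    rw [e, sub_self, Real.one_rpow, Real.zero_rpow hp, sub_zero]
  linarith

/-- the implicit upwind scheme is unconditionally `ℓ¹` contracting:
`Σ_j |U^n_j - V^n_j| ≤ Σ_j |U^0_j - V^0_j|` for all `n`, with no CFL condition. -/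
theorem implicit_upwind_l1_contracting (α τ h : ℝ) (hα : α ∈ Set.Ioo (0 : ℝ) 1)
    (hτ : 0 < τ) (hh : 0 < h) (δ : ℝ) (hδ : δ = τ ^ α / (h * Real.Gamma (2 - α)))
    (fp fm : ℝ → ℝ) (hfp : Differentiable ℝ fp) (hfm : Differentiable ℝ fm)
    (hfp' : ∀ x, 0 ≤ deriv fp x) (hfm' : ∀ x, deriv fm x ≤ 0)
    (U V : ℕ → ℤ → ℝ)
    (hU : SolvesImplicitScheme α δ fp fm U) (hV : SolvesImplicitScheme α δ fp fm V)
    (hsum : ∀ n : ℕ, Summable (fun j : ℤ => |U n j - V n j|))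
    (hfpsum : ∀ n : ℕ, Summable (fun j : ℤ => |fp (U n j) - fp (V n j)|))
    (hfmsum : ∀ n : ℕ, Summable (fun j : ℤ => |fm (U n j) - fm (V n j)|)) :
    ∀ n : ℕ, ∑' j : ℤ, |U n j - V n j| ≤ ∑' j : ℤ, |U 0 j - V 0 j| := by
  have hδ0 : 0 ≤ δ := by
    have hG : 0 < Real.Gamma (2 - α) := Real.Gamma_pos_of_pos (by linarith [hα.2])
    have hτα : 0 < τ ^ α := Real.rpow_pos_of_pos hτ α
    rw [hδ]; positivity
  have hfpm : Monotone fp := monotone_of_deriv_nonneg hfp hfp'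
  have hfmm : Antitone fm := antitone_of_deriv_nonpos hfm hfm'
  -- one-step inequality
  have step : ∀ n : ℕ,
      (∑' j : ℤ, |U (n+1) j - V (n+1) j|)
        ≤ ∑ k ∈ Finset.range (n+1), caputoCoeff α n k * ∑' j : ℤ, |U k j - V k j| := by
    intro n
    set P : ℤ → ℝ := fun j => fp (U (n+1) j) - fp (V (n+1) j) with hPdef
    set M : ℤ → ℝ := fun j => fm (U (n+1) j) - fm (V (n+1) j) with hMdef
    have hsplit : ∀ j : ℤ, ∑ k ∈ Finset.range (n+1), caputoCoeff α n k * (U k j - V k j)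
        = (∑ k ∈ Finset.range (n+1), caputoCoeff α n k * U k j)
          - ∑ k ∈ Finset.range (n+1), caputoCoeff α n k * V k j := by
      intro j; simp [mul_sub, Finset.sum_sub_distrib]
    have heq : ∀ j : ℤ, U (n+1) j - V (n+1) j
        = (∑ k ∈ Finset.range (n+1), caputoCoeff α n k * (U k j - V k j))
          - δ * P j + δ * P (j-1) - δ * M (j+1) + δ * M j := by
      intro j
      simp only [hPdef, hMdef]
      linear_combination (hU n j) - (hV n j) - hsplit j
    have hpoint : ∀ j : ℤ, |U (n+1) j - V (n+1) j| + δ * |P j| + δ * |M j|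
        ≤ (∑ k ∈ Finset.range (n+1), caputoCoeff α n k * |U k j - V k j|)
          + δ * |P (j-1)| + δ * |M (j+1)| := by
      intro j
      have hA : |∑ k ∈ Finset.range (n+1), caputoCoeff α n k * (U k j - V k j)|
          ≤ ∑ k ∈ Finset.range (n+1), caputoCoeff α n k * |U k j - V k j| := by
        refine (Finset.abs_sum_le_sum_abs _ _).trans ?_
        refine Finset.sum_le_sum fun k hk => ?_
        rw [abs_mul, abs_of_nonneg (caputo_nonneg hα (Nat.lt_succ_iff.1 (Finset.mem_range.1 hk)))]
      have hXle : (∑ k ∈ Finset.range (n+1), caputoCoeff α n k * (U k j - V k j))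
          ≤ ∑ k ∈ Finset.range (n+1), caputoCoeff α n k * |U k j - V k j| :=
        (le_abs_self _).trans hA
      have hXge : -(∑ k ∈ Finset.range (n+1), caputoCoeff α n k * (U k j - V k j))
          ≤ ∑ k ∈ Finset.range (n+1), caputoCoeff α n k * |U k j - V k j| :=
        (neg_le_abs _).trans hA
      have hb1 : δ * P (j-1) ≤ δ * |P (j-1)| :=
        mul_le_mul_of_nonneg_left (le_abs_self _) hδ0
      have hb1' : δ * (-(P (j-1))) ≤ δ * |P (j-1)| :=
        mul_le_mul_of_nonneg_left (neg_le_abs _) hδ0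
      have hb2 : δ * M (j+1) ≤ δ * |M (j+1)| :=
        mul_le_mul_of_nonneg_left (le_abs_self _) hδ0
      have hb2' : δ * (-(M (j+1))) ≤ δ * |M (j+1)| :=
        mul_le_mul_of_nonneg_left (neg_le_abs _) hδ0
      rcases lt_trichotomy (U (n+1) j - V (n+1) j) 0 with hw | hw | hw
      · have hUV : U (n+1) j ≤ V (n+1) j := by linarith
        have hPneg : P j ≤ 0 := by
          simp only [hPdef]; exact sub_nonpos.2 (hfpm hUV)
        have hMpos : 0 ≤ M j := by
          simp only [hMdef]; exact sub_nonneg.2 (hfmm hUV)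
        rw [abs_of_neg hw, abs_of_nonpos hPneg, abs_of_nonneg hMpos]
        nlinarith [heq j, hXge, hb1', hb2]
      · have hUV : U (n+1) j = V (n+1) j := by linarith
        have hP0 : P j = 0 := by simp only [hPdef, hUV, sub_self]
        have hM0 : M j = 0 := by simp only [hMdef, hUV, sub_self]
        have hApos : 0 ≤ ∑ k ∈ Finset.range (n+1), caputoCoeff α n k * |U k j - V k j| :=
          (abs_nonneg _).trans hA
        have h1 : 0 ≤ δ * |P (j-1)| := mul_nonneg hδ0 (abs_nonneg _)
        have h2 : 0 ≤ δ * |M (j+1)| := mul_nonneg hδ0 (abs_nonneg _)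
        rw [hw, hP0, hM0, abs_zero]
        linarith
      · have hUV : V (n+1) j ≤ U (n+1) j := by linarith
        have hPpos : 0 ≤ P j := by
          simp only [hPdef]; exact sub_nonneg.2 (hfpm hUV)
        have hMneg : M j ≤ 0 := by
          simp only [hMdef]; exact sub_nonpos.2 (hfmm hUV)
        rw [abs_of_pos hw, abs_of_nonneg hPpos, abs_of_nonpos hMneg]
        nlinarith [heq j, hXle, hb1, hb2']
    -- summability
    have hWs : Summable fun j : ℤ => |U (n+1) j - V (n+1) j| := hsum (n+1)
    have hPs : Summable fun j : ℤ => |P j| := by simpa [hPdef] using hfpsum (n+1)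
    have hMs : Summable fun j : ℤ => |M j| := by simpa [hMdef] using hfmsum (n+1)
    have hPs' : Summable fun j : ℤ => |P (j-1)| := by
      have := (Equiv.subRight (1:ℤ)).summable_iff.2 hPs
      exact this
    have hMs' : Summable fun j : ℤ => |M (j+1)| := by
      have := (Equiv.addRight (1:ℤ)).summable_iff.2 hMs
      exact this
    have hAs : Summable fun j : ℤ => ∑ k ∈ Finset.range (n+1),
        caputoCoeff α n k * |U k j - V k j| :=
      summable_sum fun k _ => (hsum k).mul_left _
    have hL : Summable fun j : ℤ => |U (n+1) j - V (n+1) j| + δ * |P j| + δ * |M j| :=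
      (hWs.add (hPs.mul_left δ)).add (hMs.mul_left δ)
    have hR : Summable fun j : ℤ => (∑ k ∈ Finset.range (n+1),
        caputoCoeff α n k * |U k j - V k j|) + δ * |P (j-1)| + δ * |M (j+1)| :=
      (hAs.add (hPs'.mul_left δ)).add (hMs'.mul_left δ)
    have htsum := Summable.tsum_le_tsum hpoint hL hR
    rw [Summable.tsum_add (hWs.add (hPs.mul_left δ)) (hMs.mul_left δ),
        Summable.tsum_add hWs (hPs.mul_left δ),
        Summable.tsum_add (hAs.add (hPs'.mul_left δ)) (hMs'.mul_left δ),
        Summable.tsum_add hAs (hPs'.mul_left δ), tsum_mul_left, tsum_mul_left,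
        tsum_mul_left, tsum_mul_left] at htsum
    have hshiftP : (∑' j : ℤ, |P (j-1)|) = ∑' j : ℤ, |P j| := by
      simpa [Function.comp] using (Equiv.subRight (1:ℤ)).tsum_eq (fun j => |P j|)
    have hshiftM : (∑' j : ℤ, |M (j+1)|) = ∑' j : ℤ, |M j| := by
      simpa [Function.comp] using (Equiv.addRight (1:ℤ)).tsum_eq (fun j => |M j|)
    rw [hshiftP, hshiftM] at htsum
    have hswap : (∑' j : ℤ, ∑ k ∈ Finset.range (n+1),
        caputoCoeff α n k * |U k j - V k j|)
        = ∑ k ∈ Finset.range (n+1), caputoCoeff α n k * ∑' j : ℤ, |U k j - V k j| := by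
      rw [Summable.tsum_finsetSum fun k _ => (hsum k).mul_left _]
      exact Finset.sum_congr rfl fun k _ => tsum_mul_left
    rw [hswap] at htsum
    linarith
  -- strong induction
  intro n
  induction n using Nat.strong_induction_on with
  | _ n ih =>
    match n with
    | 0 => exact le_refl _
    | Nat.succ n =>
      calc (∑' j : ℤ, |U (n+1) j - V (n+1) j|)
          ≤ ∑ k ∈ Finset.range (n+1), caputoCoeff α n k * ∑' j : ℤ, |U k j - V k j| :=
            step n
        _ ≤ ∑ k ∈ Finset.range (n+1), caputoCoeff α n k * ∑' j : ℤ, |U 0 j - V 0 j| := by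
            refine Finset.sum_le_sum fun k hk => ?_
            have hkn := Nat.lt_succ_iff.1 (Finset.mem_range.1 hk)
            exact mul_le_mul_of_nonneg_left (ih k (Nat.lt_succ_of_le hkn))
              (caputo_nonneg hα hkn)
        _ = ∑' j : ℤ, |U 0 j - V 0 j| := by
            rw [← Finset.sum_mul, caputo_sum hα, one_mul]
end
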